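/- arXiv:1603.04556 — 7 statements merged into one kernel-verified Lean document; each statement's English description precedes it below -/
import Mathlib

section
/- Let f : ℝ≥0 → ℝ be defined by f(t) = sup over θ in C with ‖θ - θ*‖ ≤ t of ⟨v - θ*, θ - θ*⟩, where C ⊆ ℝ^d is a closed convex set, θ* ∈ C and v ∈ ℝ^d. Then the map t ↦ f(t) - t²/2 has a unique maximizer t*, and ‖Proj_C(v) - θ*‖ = t*, where Proj_C(v) is the Euclidean projection of v onto C. -/
open Real Set

/-- The supremum functional `f(t) = sup_{θ ∈ C, ‖θ-θ*‖ ≤ t} ⟨v - θ*, θ - θ*⟩`. -/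
noncomputable def fsup {d : ℕ} (C : Set (EuclideanSpace ℝ (Fin d)))
    (θs v : EuclideanSpace ℝ (Fin d)) (t : ℝ) : ℝ :=
  sSup {x : ℝ | ∃ θ ∈ C, ‖θ - θs‖ ≤ t ∧ x = (inner ℝ (v - θs) (θ - θs) : ℝ)}

theorem stmt_0 {d : ℕ} (C : Set (EuclideanSpace ℝ (Fin d)))
    (hconv : Convex ℝ C) (hclosed : IsClosed C) (hne : C.Nonempty)
    (θs : EuclideanSpace ℝ (Fin d)) (hθs : θs ∈ C)
    (v proj : EuclideanSpace ℝ (Fin d))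
    (hprojC : proj ∈ C) (hproj : ∀ w ∈ C, dist v proj ≤ dist v w) :
    (∃! tstar : ℝ, 0 ≤ tstar ∧
      ∀ t : ℝ, 0 ≤ t →
        fsup C θs v t - t ^ 2 / 2 ≤ fsup C θs v tstar - tstar ^ 2 / 2) ∧
    (∀ t : ℝ, 0 ≤ t →
      fsup C θs v t - t ^ 2 / 2
        ≤ fsup C θs v ‖proj - θs‖ - ‖proj - θs‖ ^ 2 / 2) := by
  set T : ℝ := ‖proj - θs‖ with hTdef
  have hT0 : 0 ≤ T := norm_nonneg _
  -- variational inequality for the projection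
  have hvar : ∀ θ ∈ C, (inner ℝ (v - proj) (θ - proj) : ℝ) ≤ 0 := by
    intro θ hθ
    set c : ℝ := (inner ℝ (v - proj) (θ - proj) : ℝ) with hc
    set b2 : ℝ := ‖θ - proj‖ ^ 2 with hb2
    have hb2nn : 0 ≤ b2 := sq_nonneg _
    have hstep : ∀ s : ℝ, 0 < s → s ≤ 1 → 2 * c ≤ s * b2 := by
      intro s hs hs1
      have hw : (1 - s) • proj + s • θ ∈ C :=
        hconv hprojC hθ (by linarith) (le_of_lt hs) (by ring)
      have hd := hproj _ hw
      rw [dist_eq_norm, dist_eq_norm] at hd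
      have hsq : ‖v - proj‖ ^ 2 ≤ ‖v - ((1 - s) • proj + s • θ)‖ ^ 2 :=
        pow_le_pow_left₀ (norm_nonneg _) hd 2
      have heq : v - ((1 - s) • proj + s • θ) = (v - proj) - s • (θ - proj) := by
        module
      rw [heq, norm_sub_sq_real (v - proj) (s • (θ - proj)), inner_smul_right, norm_smul, mul_pow] at hsq
      have habs : ‖s‖ ^ 2 = s ^ 2 := by
        rw [Real.norm_eq_abs, sq_abs]
      rw [habs] at hsq
      have hs2 : s * (2 * c) ≤ s * (s * b2) := by nlinarith
      exact le_of_mul_le_mul_left hs2 hs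
    by_contra h
    push_neg at h
    rcases eq_or_lt_of_le hb2nn with hb0 | hbpos
    · have := hstep 1 one_pos le_rfl
      rw [← hb0] at this
      linarith
    · have hs' : 0 < min 1 (c / b2) := by
        apply lt_min one_pos
        exact div_pos h hbpos
      have := hstep (min 1 (c / b2)) hs' (min_le_left _ _)
      have h2 : min 1 (c / b2) * b2 ≤ (c / b2) * b2 :=
        mul_le_mul_of_nonneg_right (min_le_right _ _) hb2nn
      rw [div_mul_cancel₀ _ (ne_of_gt hbpos)] at h2
      linarith
  -- sets are bounded above
  have hbdd : ∀ s : ℝ, BddAbove {x : ℝ | ∃ θ ∈ C, ‖θ - θs‖ ≤ s ∧ x = (inner ℝ (v - θs) (θ - θs) : ℝ)} := by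
    intro s
    refine ⟨‖v - θs‖ * s, ?_⟩
    rintro x ⟨θ, hθ, hn, rfl⟩
    calc (inner ℝ (v - θs) (θ - θs) : ℝ) ≤ ‖v - θs‖ * ‖θ - θs‖ := real_inner_le_norm _ _
      _ ≤ ‖v - θs‖ * s := mul_le_mul_of_nonneg_left hn (norm_nonneg _)
  -- sets are nonempty for t ≥ 0
  have hnonempty : ∀ s : ℝ, 0 ≤ s →
      ({x : ℝ | ∃ θ ∈ C, ‖θ - θs‖ ≤ s ∧ x = (inner ℝ (v - θs) (θ - θs) : ℝ)}).Nonempty := by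
    intro s hs
    exact ⟨_, θs, hθs, by simpa using hs, rfl⟩
  -- lower bound for fsup at T
  have hle : (inner ℝ (v - θs) (proj - θs) : ℝ) ≤ fsup C θs v T :=
    le_csSup (hbdd T) ⟨proj, hprojC, le_rfl, rfl⟩
  -- key quantitative inequality
  have key : ∀ t : ℝ, 0 ≤ t →
      fsup C θs v t - t ^ 2 / 2 ≤ fsup C θs v T - T ^ 2 / 2 - (t - T) ^ 2 / 2 := by
    intro t ht
    have hsup : fsup C θs v t ≤ fsup C θs v T + t ^ 2 / 2 - T ^ 2 / 2 - (t - T) ^ 2 / 2 := by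
      apply csSup_le (hnonempty t ht)
      rintro x ⟨θ, hθ, hn, rfl⟩
      have A : (inner ℝ (v - proj) (θ - proj) : ℝ) ≤ 0 := hvar θ hθ
      set a : ℝ := ‖θ - θs‖ with ha
      set b : ℝ := ‖θ - proj‖ with hb
      have hC : (a - T) ^ 2 ≤ b ^ 2 := by
        have h1 : |a - T| ≤ b := by
          have := abs_norm_sub_norm_le (θ - θs) (proj - θs)
          simpa [ha, hb, hTdef, show (θ - θs) - (proj - θs) = θ - proj from by abel] using this
        calc (a - T) ^ 2 = |a - T| ^ 2 := (sq_abs _).symm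
          _ ≤ b ^ 2 := pow_le_pow_left₀ (abs_nonneg _) h1 2
      have e1 : (inner ℝ (v - θs) (θ - θs) : ℝ) =
          (inner ℝ (v - proj) (θ - proj) : ℝ) + (inner ℝ (v - θs) (proj - θs) : ℝ)
            + (inner ℝ (proj - θs) (θ - proj) : ℝ) := by
        have h1 : v - θs = (v - proj) + (proj - θs) := by abel
        have h2 : θ - θs = (θ - proj) + (proj - θs) := by abel
        rw [h1, h2, inner_add_left, inner_add_right, inner_add_right, inner_add_left]
        ring
      have e2 : (inner ℝ (proj - θs) (θ - proj) : ℝ) = (a ^ 2 - b ^ 2 - T ^ 2) / 2 := by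
        have h2 : θ - θs = (θ - proj) + (proj - θs) := by abel
        have := norm_add_sq_real (θ - proj) (proj - θs)
        rw [← h2] at this
        rw [real_inner_comm]
        rw [← ha, ← hb, ← hTdef] at this
        linarith
      nlinarith [mul_nonneg (sub_nonneg.2 hn) hT0, hle]
    linarith
  have hmaxT : ∀ t : ℝ, 0 ≤ t →
      fsup C θs v t - t ^ 2 / 2 ≤ fsup C θs v T - T ^ 2 / 2 := by
    intro t ht
    have := key t ht
    nlinarith [sq_nonneg (t - T)]
  refine ⟨⟨T, ⟨hT0, hmaxT⟩, ?_⟩, hmaxT⟩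
  rintro t' ⟨ht'0, ht'max⟩
  have h1 := ht'max T hT0
  have h2 := key t' ht'0
  have h3 : (t' - T) ^ 2 ≤ 0 := by linarith
  have h4 : t' - T = 0 := by nlinarith [sq_nonneg (t' - T)]
  linarith
end

section
/- With f and t* as above (f(t) = sup over θ ∈ C, ‖θ-θ*‖ ≤ t of ⟨v - θ*, θ - θ*⟩, and t* the maximizer of f(t) - t²/2), if s > 0 satisfies f(s) - s²/2 ≤ 0, then t* ≤ s. Consequently ‖Proj_C(v) - θ*‖ ≤ s. -/
open Real Set

lemma fsup_bddAbove {d : ℕ} (C : Set (EuclideanSpace ℝ (Fin d)))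
    (θs v : EuclideanSpace ℝ (Fin d)) (t : ℝ) :
    BddAbove {x : ℝ | ∃ θ ∈ C, ‖θ - θs‖ ≤ t ∧ x = (inner ℝ (v - θs) (θ - θs) : ℝ)} := by
  refine ⟨‖v - θs‖ * max t 0, ?_⟩
  rintro x ⟨θ, hθ, hn, rfl⟩
  calc (inner ℝ (v - θs) (θ - θs) : ℝ) ≤ ‖v - θs‖ * ‖θ - θs‖ := real_inner_le_norm _ _
    _ ≤ ‖v - θs‖ * max t 0 := by
        gcongr
        exact hn.trans (le_max_left _ _)

lemma fsup_zero_mem {d : ℕ} (C : Set (EuclideanSpace ℝ (Fin d)))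
    (θs v : EuclideanSpace ℝ (Fin d)) (hθs : θs ∈ C) (t : ℝ) (ht : 0 ≤ t) :
    (0 : ℝ) ∈ {x : ℝ | ∃ θ ∈ C, ‖θ - θs‖ ≤ t ∧ x = (inner ℝ (v - θs) (θ - θs) : ℝ)} :=
  ⟨θs, hθs, by simpa using ht, by simp⟩

lemma fsup_nonneg {d : ℕ} (C : Set (EuclideanSpace ℝ (Fin d)))
    (θs v : EuclideanSpace ℝ (Fin d)) (hθs : θs ∈ C) (t : ℝ) (ht : 0 ≤ t) :
    0 ≤ fsup C θs v t :=
  le_csSup (fsup_bddAbove C θs v t) (fsup_zero_mem C θs v hθs t ht)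

/-- Scaling: for `0 < s ≤ t`, `fsup t ≤ (t/s) * fsup s`. -/
lemma fsup_scale {d : ℕ} (C : Set (EuclideanSpace ℝ (Fin d))) (hconv : Convex ℝ C)
    (θs v : EuclideanSpace ℝ (Fin d)) (hθs : θs ∈ C) {s t : ℝ}
    (hs : 0 < s) (hst : s ≤ t) :
    fsup C θs v t ≤ (t / s) * fsup C θs v s := by
  have ht : 0 < t := hs.trans_le hst
  apply csSup_le ⟨0, fsup_zero_mem C θs v hθs t ht.le⟩
  rintro x ⟨θ, hθ, hn, rfl⟩
  have hr0 : 0 ≤ s / t := by positivity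
  have hr1 : s / t ≤ 1 := by
    rw [div_le_one ht]; exact hst
  set θ' := (s / t) • θ + (1 - s / t) • θs with hθ'def
  have hθ'C : θ' ∈ C := hconv hθ hθs hr0 (by linarith) (by ring)
  have hsub : θ' - θs = (s / t) • (θ - θs) := by
    rw [hθ'def]; module
  have hmem : (s / t) * (inner ℝ (v - θs) (θ - θs) : ℝ) ∈
      {x : ℝ | ∃ θ ∈ C, ‖θ - θs‖ ≤ s ∧ x = (inner ℝ (v - θs) (θ - θs) : ℝ)} := by
    refine ⟨θ', hθ'C, ?_, ?_⟩
    · rw [hsub, norm_smul]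
      calc ‖(s/t : ℝ)‖ * ‖θ - θs‖ = (s/t) * ‖θ - θs‖ := by rw [Real.norm_of_nonneg hr0]
        _ ≤ (s/t) * t := by gcongr
        _ = s := by field_simp
    · rw [hsub, real_inner_smul_right]
  have hle : (s / t) * (inner ℝ (v - θs) (θ - θs) : ℝ) ≤ fsup C θs v s :=
    le_csSup (fsup_bddAbove C θs v s) hmem
  have htne : (t : ℝ) ≠ 0 := ht.ne'
  calc (inner ℝ (v - θs) (θ - θs) : ℝ)
      = (t / s) * ((s / t) * (inner ℝ (v - θs) (θ - θs) : ℝ)) := by field_simp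
    _ ≤ (t / s) * fsup C θs v s := by
        have : 0 ≤ t / s := by positivity
        exact mul_le_mul_of_nonneg_left hle this

theorem stmt_1 {d : ℕ} (C : Set (EuclideanSpace ℝ (Fin d)))
    (hconv : Convex ℝ C) (hclosed : IsClosed C) (hne : C.Nonempty)
    (θs : EuclideanSpace ℝ (Fin d)) (hθs : θs ∈ C)
    (v proj : EuclideanSpace ℝ (Fin d))
    (hprojC : proj ∈ C) (hproj : ∀ w ∈ C, dist v proj ≤ dist v w)
    (tstar : ℝ) (htstar0 : 0 ≤ tstar)
    (htstar : ∀ t : ℝ, 0 ≤ t →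
      fsup C θs v t - t ^ 2 / 2 ≤ fsup C θs v tstar - tstar ^ 2 / 2)
    (s : ℝ) (hs : 0 < s) (hfs : fsup C θs v s - s ^ 2 / 2 ≤ 0) :
    tstar ≤ s ∧ ‖proj - θs‖ ≤ s := by
  have hfs' : fsup C θs v s ≤ s ^ 2 / 2 := by linarith
  constructor
  · -- tstar ≤ s
    by_contra hlt
    push_neg at hlt
    have h0 : (0:ℝ) ≤ fsup C θs v tstar - tstar ^ 2 / 2 := by
      have := htstar 0 le_rfl
      have h00 : fsup C θs v 0 = 0 := by
        apply le_antisymm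
        · apply csSup_le ⟨0, fsup_zero_mem C θs v hθs 0 le_rfl⟩
          rintro x ⟨θ, hθ, hn, rfl⟩
          have : θ = θs := by
            have := norm_nonneg (θ - θs)
            have : ‖θ - θs‖ = 0 := le_antisymm hn this
            rwa [norm_eq_zero, sub_eq_zero] at this
          simp [this]
        · exact fsup_nonneg C θs v hθs 0 le_rfl
      simpa [h00] using this
    have hscale := fsup_scale C hconv θs v hθs hs hlt.le
    -- fsup tstar ≥ tstar^2/2, fsup tstar ≤ (tstar/s) * fsup s ≤ (tstar/s) * s^2/2 = tstar*s/2
    have h1 : tstar ^ 2 / 2 ≤ fsup C θs v tstar := by linarith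
    have h2 : fsup C θs v tstar ≤ tstar * s / 2 := by
      calc fsup C θs v tstar ≤ (tstar / s) * fsup C θs v s := hscale
        _ ≤ (tstar / s) * (s ^ 2 / 2) := by
            apply mul_le_mul_of_nonneg_left hfs'
            positivity
        _ = tstar * s / 2 := by field_simp
    nlinarith [hs.trans hlt]
  · -- ‖proj - θs‖ ≤ s
    set r := ‖proj - θs‖ with hr
    -- projection inequality: ⟪v - proj, w - proj⟫ ≤ 0 for w ∈ C
    have hinf : ‖v - proj‖ = ⨅ w : C, ‖v - w‖ := by
      have hne' : Nonempty C := ⟨⟨proj, hprojC⟩⟩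
      apply le_antisymm
      · apply le_ciInf
        intro w
        have := hproj w w.2
        simpa [dist_eq_norm] using this
      · have hbdd : BddBelow (Set.range fun w : C => ‖v - (w : EuclideanSpace ℝ (Fin d))‖) := by
          refine ⟨0, ?_⟩
          rintro x ⟨w, rfl⟩
          exact norm_nonneg _
        exact ciInf_le hbdd ⟨proj, hprojC⟩
    have hchar := (norm_eq_iInf_iff_real_inner_le_zero hconv hprojC).mp hinf
    have hkey : r ^ 2 ≤ (inner ℝ (v - θs) (proj - θs) : ℝ) := by
      have h1 : (inner ℝ (v - proj) (θs - proj) : ℝ) ≤ 0 := hchar θs hθs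
      have h2 : (inner ℝ (v - θs) (proj - θs) : ℝ)
          = - (inner ℝ (v - proj) (θs - proj) : ℝ) + (inner ℝ (proj - θs) (proj - θs) : ℝ) := by
        have : (v - θs) = (v - proj) + (proj - θs) := by abel
        rw [this, inner_add_left]
        have h3 : (inner ℝ (v - proj) (proj - θs) : ℝ) = - (inner ℝ (v - proj) (θs - proj) : ℝ) := by
          rw [← inner_neg_right]; congr 1; abel
        rw [h3]
      rw [h2, real_inner_self_eq_norm_sq]
      linarith
    have hfr : r ^ 2 ≤ fsup C θs v r := by
      refine le_trans hkey (le_csSup (fsup_bddAbove C θs v r) ?_)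
      exact ⟨proj, hprojC, le_rfl, rfl⟩
    by_contra hlt
    push_neg at hlt
    have hrpos : 0 < r := hs.trans hlt
    have hscale := fsup_scale C hconv θs v hθs hs hlt.le
    have : fsup C θs v r ≤ (r / s) * (s ^ 2 / 2) := by
      refine hscale.trans ?_
      apply mul_le_mul_of_nonneg_left hfs'
      positivity
    have heq : (r / s) * (s ^ 2 / 2) = r * s / 2 := by field_simp
    nlinarith
end

section
/- The function t ↦ sup over θ ∈ C with ‖θ - θ*‖ ≤ t of ⟨v - θ*, θ - θ*⟩ is concave on [0,∞), satisfies f(0) = 0, and f(t) ≤ t·‖v - θ*‖ for all t ≥ 0. -/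
open Real Set

section aux

variable {d : ℕ} {C : Set (EuclideanSpace ℝ (Fin d))} {θs v : EuclideanSpace ℝ (Fin d)}

private def fset (C : Set (EuclideanSpace ℝ (Fin d))) (θs v : EuclideanSpace ℝ (Fin d))
    (t : ℝ) : Set ℝ :=
  {x : ℝ | ∃ θ ∈ C, ‖θ - θs‖ ≤ t ∧ x = (inner ℝ (v - θs) (θ - θs) : ℝ)}

private lemma zero_mem_fset (hθs : θs ∈ C) {t : ℝ} (ht : 0 ≤ t) : (0 : ℝ) ∈ fset C θs v t := by
  refine ⟨θs, hθs, by simp [ht], by simp⟩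

private lemma fset_bdd {t : ℝ} : ∀ x ∈ fset C θs v t, x ≤ t * ‖v - θs‖ := by
  rintro x ⟨θ, hθ, hn, rfl⟩
  calc (inner ℝ (v - θs) (θ - θs) : ℝ) ≤ ‖v - θs‖ * ‖θ - θs‖ := real_inner_le_norm _ _
    _ ≤ ‖v - θs‖ * t := by
        exact mul_le_mul_of_nonneg_left hn (norm_nonneg _)
    _ = t * ‖v - θs‖ := mul_comm _ _

private lemma mul_csSup_le {a M : ℝ} (ha : 0 ≤ a) {S : Set ℝ} (hne : S.Nonempty)
    (h : ∀ x ∈ S, a * x ≤ M) : a * sSup S ≤ M := by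
  rcases eq_or_lt_of_le ha with rfl | ha'
  · obtain ⟨x, hx⟩ := hne
    simpa using h x hx
  · have : sSup S ≤ M / a := csSup_le hne fun x hx => (le_div_iff₀ ha').2 (by
      rw [mul_comm]; exact h x hx)
    calc a * sSup S ≤ a * (M / a) := by
          exact mul_le_mul_of_nonneg_left this ha
      _ = M := by field_simp

end aux

theorem stmt_2 {d : ℕ} (C : Set (EuclideanSpace ℝ (Fin d)))
    (hconv : Convex ℝ C) (hclosed : IsClosed C) (hne : C.Nonempty)
    (θs : EuclideanSpace ℝ (Fin d)) (hθs : θs ∈ C)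
    (v : EuclideanSpace ℝ (Fin d)) :
    ConcaveOn ℝ (Set.Ici (0 : ℝ)) (fsup C θs v) ∧
    fsup C θs v 0 = 0 ∧
    ∀ t : ℝ, 0 ≤ t → fsup C θs v t ≤ t * ‖v - θs‖ := by
  have hset : ∀ t, fsup C θs v t = sSup (fset C θs v t) := fun t => rfl
  have hbdd : ∀ t : ℝ, BddAbove (fset C θs v t) :=
    fun t => ⟨t * ‖v - θs‖, fun x hx => fset_bdd x hx⟩
  have hnee : ∀ t : ℝ, 0 ≤ t → (fset C θs v t).Nonempty :=
    fun t ht => ⟨0, zero_mem_fset hθs ht⟩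
  have hle : ∀ t : ℝ, 0 ≤ t → fsup C θs v t ≤ t * ‖v - θs‖ := by
    intro t ht
    exact csSup_le (hnee t ht) fset_bdd
  refine ⟨?_, ?_, hle⟩
  · refine ⟨convex_Ici 0, ?_⟩
    intro s hs t ht a b ha hb hab
    simp only [smul_eq_mul] at *
    have key : ∀ x₁ ∈ fset C θs v s, ∀ x₂ ∈ fset C θs v t,
        a * x₁ + b * x₂ ≤ fsup C θs v (a * s + b * t) := by
      rintro x₁ ⟨θ₁, hθ₁, hn₁, rfl⟩ x₂ ⟨θ₂, hθ₂, hn₂, rfl⟩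
      rw [hset]
      apply le_csSup (hbdd _)
      refine ⟨a • θ₁ + b • θ₂, hconv hθ₁ hθ₂ ha hb hab, ?_, ?_⟩
      · have : a • θ₁ + b • θ₂ - θs = a • (θ₁ - θs) + b • (θ₂ - θs) := by
          have h : θs = a • θs + b • θs := by rw [← add_smul, hab, one_smul]
          rw [smul_sub, smul_sub]
          nth_rewrite 1 [h]
          abel
        rw [this]
        calc ‖a • (θ₁ - θs) + b • (θ₂ - θs)‖ ≤ ‖a • (θ₁ - θs)‖ + ‖b • (θ₂ - θs)‖ :=
              norm_add_le _ _
          _ = a * ‖θ₁ - θs‖ + b * ‖θ₂ - θs‖ := by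
              rw [norm_smul, norm_smul, Real.norm_of_nonneg ha, Real.norm_of_nonneg hb]
          _ ≤ a * s + b * t := by
              gcongr
      · have : a • θ₁ + b • θ₂ - θs = a • (θ₁ - θs) + b • (θ₂ - θs) := by
          have h : θs = a • θs + b • θs := by rw [← add_smul, hab, one_smul]
          rw [smul_sub, smul_sub]
          nth_rewrite 1 [h]
          abel
        rw [this, inner_add_right, real_inner_smul_right, real_inner_smul_right]
    -- from key, conclude
    obtain ⟨x₂, hx₂⟩ := hnee t (mem_Ici.mp ht)
    have step1 : ∀ x₂ ∈ fset C θs v t,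
        b * x₂ ≤ fsup C θs v (a * s + b * t) - a * fsup C θs v s := by
      intro x₂ hx₂
      have : a * sSup (fset C θs v s) ≤ fsup C θs v (a * s + b * t) - b * x₂ := by
        apply mul_csSup_le ha (hnee s (mem_Ici.mp hs))
        intro x₁ hx₁
        linarith [key x₁ hx₁ x₂ hx₂]
      rw [← hset] at this
      linarith
    have step2 : b * sSup (fset C θs v t) ≤
        fsup C θs v (a * s + b * t) - a * fsup C θs v s :=
      mul_csSup_le hb (hnee t (mem_Ici.mp ht)) step1
    rw [← hset] at step2
    linarith
  · rw [hset]
    apply le_antisymm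
    · apply csSup_le (hnee 0 le_rfl)
      rintro x ⟨θ, hθ, hn, rfl⟩
      have : θ = θs := by
        have := norm_sub_eq_zero_iff.mp (le_antisymm hn (norm_nonneg _))
        exact this
      simp [this]
    · exact le_csSup (hbdd 0) (zero_mem_fset hθs le_rfl)
end

section
/- (Gilbert–Varshamov type bound) For every positive integer d divisible by 4, there exists a subset F of the set {v ∈ {0,1}^d : Σᵢ vᵢ = d/2} such that |F| ≥ exp(d/32) and for all distinct w, w' ∈ F, the Hamming distance satisfies d/8 ≤ H(w,w') ≤ d/2. (It suffices to prove this for d sufficiently large.) -/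
open Finset

section aux

variable {α : Type*} [DecidableEq α]

/-- Greedy packing lemma. -/
lemma gv_greedy (close : α → α → Prop) [DecidableRel close]
    (hsym : ∀ a b, close a b → close b a) (hrefl : ∀ a, close a a) (m : ℕ) :
    ∀ n (T : Finset α), T.card ≤ n → (∀ a ∈ T, (T.filter (fun b => close a b)).card ≤ m) →
    ∃ F : Finset α, F ⊆ T ∧ T.card ≤ F.card * m ∧
      ∀ a ∈ F, ∀ b ∈ F, a ≠ b → ¬ close a b := by
  intro n
  induction n with
  | zero =>
    intro T hT _
    refine ⟨∅, by simp, by simpa using hT, by simp⟩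
  | succ n ih =>
    intro T hT hball
    rcases T.eq_empty_or_nonempty with rfl | ⟨a, ha⟩
    · exact ⟨∅, by simp, by simp, by simp⟩
    · set Ba := T.filter (fun b => close a b) with hBa
      have haBa : a ∈ Ba := mem_filter.2 ⟨ha, hrefl a⟩
      set T' := T \ Ba with hT'
      have hsub : T' ⊆ T := sdiff_subset
      have haT' : a ∉ T' := by simp [hT', haBa]
      have hcardT' : T'.card ≤ n := by
        have hss : T' ⊂ T := ssubset_iff_of_subset hsub |>.2 ⟨a, ha, haT'⟩
        have := card_lt_card hss
        omega
      have hball' : ∀ b ∈ T', (T'.filter (fun c => close b c)).card ≤ m := by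
        intro b hb
        exact le_trans (card_le_card (filter_subset_filter _ hsub)) (hball b (hsub hb))
      obtain ⟨F, hFsub, hFcard, hFpair⟩ := ih T' hcardT' hball'
      have haF : a ∉ F := fun h => haT' (hFsub h)
      refine ⟨insert a F, ?_, ?_, ?_⟩
      · intro x hx
        rcases mem_insert.1 hx with rfl | hx
        · exact ha
        · exact hsub (hFsub hx)
      · have hBsub : Ba ⊆ T := by rw [hBa]; exact filter_subset _ _
        have hle : Ba.card ≤ T.card := card_le_card hBsub
        have hsd : T'.card = T.card - Ba.card := by rw [hT', card_sdiff_of_subset hBsub]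
        have h1 : T.card = T'.card + Ba.card := by omega
        have h2 : Ba.card ≤ m := hball a ha
        rw [card_insert_of_notMem haF]
        calc T.card = T'.card + Ba.card := h1
          _ ≤ F.card * m + m := by omega
          _ = (F.card + 1) * m := by ring
      · intro x hx y hy hxy
        rcases mem_insert.1 hx with hxa | hxF <;> rcases mem_insert.1 hy with hya | hyF
        · exact absurd (hxa.trans hya.symm) hxy
        · subst hxa
          intro hc
          have h3 : y ∈ Ba := by rw [hBa]; exact mem_filter.2 ⟨hsub (hFsub hyF), hc⟩
          have h4 : y ∉ Ba := by
            have := hFsub hyF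
            rw [hT', mem_sdiff] at this
            exact this.2
          exact h4 h3
        · subst hya
          intro hc
          have h3 : x ∈ Ba := by rw [hBa]; exact mem_filter.2 ⟨hsub (hFsub hxF), hsym _ _ hc⟩
          have h4 : x ∉ Ba := by
            have := hFsub hxF
            rw [hT', mem_sdiff] at this
            exact this.2
          exact h4 h3
        · exact hFpair x hxF y hyF hxy

/-- doubling step for binomial coefficients below the `c`-th one out of `3c`. -/
lemma gv_choose_step (c j : ℕ) (h : j + 1 ≤ c) :
    2 * Nat.choose (3 * c) j ≤ Nat.choose (3 * c) (j + 1) := by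
  have key := Nat.choose_succ_right_eq (3 * c) j
  have h1 : 2 * (j + 1) ≤ 3 * c - j := by omega
  have h2 : 2 * Nat.choose (3 * c) j * (j + 1) ≤ Nat.choose (3 * c) (j + 1) * (j + 1) := by
    rw [key]
    calc 2 * Nat.choose (3 * c) j * (j + 1) = Nat.choose (3 * c) j * (2 * (j + 1)) := by ring
      _ ≤ Nat.choose (3 * c) j * (3 * c - j) := Nat.mul_le_mul_left _ h1
  exact Nat.le_of_mul_le_mul_right h2 (by omega)

lemma gv_choose_mono (c : ℕ) : ∀ j j' : ℕ, j ≤ j' → j' ≤ c →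
    Nat.choose (3 * c) j ≤ Nat.choose (3 * c) j' := by
  intro j j' hj hj'
  induction j' with
  | zero => simp_all
  | succ n ih =>
    rcases Nat.lt_or_ge j (n + 1) with h | h
    · have := ih (by omega) (by omega)
      have := gv_choose_step c n (by omega)
      omega
    · have : j = n + 1 := by omega
      subst this; rfl

lemma gv_choose_pow (c : ℕ) : ∀ i k : ℕ, k + i ≤ c →
    2 ^ i * Nat.choose (3 * c) k ≤ Nat.choose (3 * c) (k + i) := by
  intro i
  induction i with
  | zero => intro k _; simp
  | succ n ih =>
    intro k hk
    have h1 := ih k (by omega)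
    have h2 := gv_choose_step c (k + n) (by omega)
    calc 2 ^ (n + 1) * Nat.choose (3 * c) k = 2 * (2 ^ n * Nat.choose (3 * c) k) := by ring
      _ ≤ 2 * Nat.choose (3 * c) (k + n) := by omega
      _ ≤ Nat.choose (3 * c) (k + n + 1) := gv_choose_step c (k + n) (by omega)
      _ = Nat.choose (3 * c) (k + (n + 1)) := by ring_nf

/-- The key analytic estimate. -/
lemma gv_real_est (c : ℕ) (hc : 32 ≤ c) :
    Real.exp ((4 * c : ℝ) / 32) * ((((c / 2 : ℕ) : ℝ) + 1) * ((Nat.choose (3 * c) (c / 2) : ℕ) : ℝ)) ≤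
      (Nat.choose (3 * c) c : ℝ) := by
  set k := c / 2 with hk
  have hkc : k ≤ c := Nat.div_le_self _ _
  have hpow : 2 ^ (c - k) * Nat.choose (3 * c) k ≤ Nat.choose (3 * c) c := by
    have := gv_choose_pow c (c - k) k (by omega)
    rwa [Nat.add_sub_cancel' hkc] at this
  have hchoosepos : 0 < Nat.choose (3 * c) k := Nat.choose_pos (by omega)
  -- real inequality: exp(c/8) * (k+1) ≤ 2^(c-k)
  have hlog2 : (0.6931471803 : ℝ) < Real.log 2 := Real.log_two_gt_d9
  have hkr : (k : ℝ) ≤ (c : ℝ) / 2 := by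
    have : (2 : ℕ) * k ≤ c := by omega
    have := (Nat.cast_le (α := ℝ)).2 this
    push_cast at this
    linarith
  have hckr : (c : ℝ) / 2 ≤ ((c - k : ℕ) : ℝ) := by
    have h2 : (2 : ℕ) * (c - k) ≥ c := by omega
    have := (Nat.cast_le (α := ℝ)).2 h2
    push_cast at this
    linarith
  have hmain : Real.exp ((4 * c : ℝ) / 32) * ((k : ℝ) + 1) ≤ (2 : ℝ) ^ (c - k) := by
    have h2pow : ((2 : ℝ)) ^ (c - k) = Real.exp (((c - k : ℕ) : ℝ) * Real.log 2) := by
      rw [Real.exp_nat_mul, Real.exp_log (by norm_num : (0:ℝ) < 2)]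
    rw [h2pow]
    set t : ℝ := ((c - k : ℕ) : ℝ) * Real.log 2 - (4 * c : ℝ) / 32 with ht
    have hcpos : (32 : ℝ) ≤ (c : ℝ) := by exact_mod_cast hc
    have htge : (0.22 : ℝ) * c ≤ t := by
      have : ((c : ℝ) / 2) * (0.6931471803) ≤ ((c - k : ℕ) : ℝ) * Real.log 2 := by
        apply mul_le_mul hckr (le_of_lt hlog2) (by norm_num) (by positivity)
      rw [ht]
      nlinarith
    have hexp : (1 + t / 2) ^ 2 ≤ Real.exp t := by
      have h1 : t / 2 + 1 ≤ Real.exp (t / 2) := Real.add_one_le_exp _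
      have h2 : (0 : ℝ) ≤ 1 + t / 2 := by nlinarith
      calc (1 + t / 2) ^ 2 ≤ Real.exp (t / 2) ^ 2 := by nlinarith
        _ = Real.exp t := by rw [← Real.exp_nat_mul]; ring_nf
    have hlin : (k : ℝ) + 1 ≤ (1 + t / 2) ^ 2 := by nlinarith
    calc Real.exp ((4 * c : ℝ) / 32) * ((k : ℝ) + 1)
        ≤ Real.exp ((4 * c : ℝ) / 32) * Real.exp t := by
          apply mul_le_mul_of_nonneg_left (le_trans hlin hexp) (le_of_lt (Real.exp_pos _))
      _ = Real.exp (((c - k : ℕ) : ℝ) * Real.log 2) := by rw [← Real.exp_add]; congr 1; rw [ht]; ring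
  -- combine
  have hpowr : ((2 : ℝ)) ^ (c - k) * (Nat.choose (3 * c) k : ℝ) ≤ (Nat.choose (3 * c) c : ℝ) := by
    exact_mod_cast hpow
  have hch : (0 : ℝ) ≤ (Nat.choose (3 * c) k : ℝ) := by positivity
  calc Real.exp ((4 * c : ℝ) / 32) * (((k : ℝ) + 1) * (Nat.choose (3 * c) k : ℝ))
      = (Real.exp ((4 * c : ℝ) / 32) * ((k : ℝ) + 1)) * (Nat.choose (3 * c) k : ℝ) := by ring
    _ ≤ (2 : ℝ) ^ (c - k) * (Nat.choose (3 * c) k : ℝ) := mul_le_mul_of_nonneg_right hmain hch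
    _ ≤ (Nat.choose (3 * c) c : ℝ) := hpowr

end aux

/-- Gilbert–Varshamov type bound. -/
theorem stmt_3 : ∃ d₀ : ℕ, ∀ d : ℕ, d₀ ≤ d → 0 < d → 4 ∣ d →
    ∃ F : Finset (Fin d → Fin 2),
      (∀ w ∈ F, ∑ i, ((w i : ℕ)) = d / 2) ∧
      Real.exp ((d : ℝ) / 32) ≤ (F.card : ℝ) ∧
      ∀ w ∈ F, ∀ w' ∈ F, w ≠ w' →
        (d : ℝ) / 8 ≤ (hammingDist w w' : ℝ) ∧ (hammingDist w w' : ℝ) ≤ (d : ℝ) / 2 := by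
  classical
  use 128
  intro d hd hdpos hdvd
  obtain ⟨c, rfl⟩ : ∃ c, d = 4 * c := ⟨d / 4, by omega⟩
  have hc : 32 ≤ c := by omega
  set k := c / 2 with hk
  -- base set of coordinates fixed to 1
  set B₀ : Finset (Fin (4 * c)) :=
    (Finset.range c).attachFin (fun m hm => by simpa using lt_of_lt_of_le (mem_range.1 hm) (by omega)) with hB₀
  have hB₀card : B₀.card = c := by rw [hB₀, card_attachFin, card_range]
  have hB₀mem : ∀ i : Fin (4 * c), i ∈ B₀ ↔ (i : ℕ) < c := by
    intro i; rw [hB₀, mem_attachFin, mem_range]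
  have hB₀compl : B₀ᶜ.card = 3 * c := by
    rw [card_compl, hB₀card, Fintype.card_fin]; omega
  -- the structured slice
  set T : Finset (Finset (Fin (4 * c))) :=
    (Finset.powersetCard c B₀ᶜ).image (fun S => B₀ ∪ S) with hT
  have hTcard : T.card = Nat.choose (3 * c) c := by
    rw [hT, card_image_of_injOn, card_powersetCard, hB₀compl]
    intro S hS S' hS' hSS
    rw [mem_coe, mem_powersetCard] at hS hS'
    have hd1 : Disjoint B₀ S := by
      rw [disjoint_left]; intro a ha haS
      have := hS.1 haS; simp [mem_compl] at this; exact this ha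
    have hd2 : Disjoint B₀ S' := by
      rw [disjoint_left]; intro a ha haS
      have := hS'.1 haS; simp [mem_compl] at this; exact this ha
    have hSS' : B₀ ∪ S = B₀ ∪ S' := hSS
    have : (B₀ ∪ S) \ B₀ = (B₀ ∪ S') \ B₀ := by rw [hSS']
    rwa [union_sdiff_cancel_left hd1, union_sdiff_cancel_left hd2] at this
  have hTmem : ∀ A ∈ T, B₀ ⊆ A ∧ A.card = 2 * c ∧ (A \ B₀).card = c := by
    intro A hA
    rw [hT, mem_image] at hA
    obtain ⟨S, hS, rfl⟩ := hA
    rw [mem_powersetCard] at hS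
    have hd1 : Disjoint B₀ S := by
      rw [disjoint_left]; intro a ha haS
      have := hS.1 haS; simp [mem_compl] at this; exact this ha
    refine ⟨subset_union_left, ?_, ?_⟩
    · rw [card_union_of_disjoint hd1, hB₀card, hS.2]; ring
    · rw [union_sdiff_cancel_left hd1, hS.2]
  -- ball bound
  set m : ℕ := ∑ j ∈ Finset.range (k + 1), Nat.choose (3 * c) j with hm
  have hball : ∀ A ∈ T, (T.filter (fun B => (symmDiff A B).card ≤ k)).card ≤ m := by
    intro A hA
    set U : Finset (Finset (Fin (4 * c))) :=
      (Finset.range (k + 1)).biUnion (fun j => Finset.powersetCard j B₀ᶜ) with hU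
    have hinj : Set.InjOn (fun B => symmDiff A B) (T.filter (fun B => (symmDiff A B).card ≤ k)) := by
      intro B hB B' hB' hBB
      exact symmDiff_right_injective A hBB
    have hmaps : ∀ B ∈ T.filter (fun B => (symmDiff A B).card ≤ k), symmDiff A B ∈ U := by
      intro B hB
      rw [mem_filter] at hB
      rw [hU, mem_biUnion]
      refine ⟨(symmDiff A B).card, mem_range.2 (by omega), ?_⟩
      rw [mem_powersetCard]
      refine ⟨?_, rfl⟩
      intro i hi
      rw [Finset.mem_symmDiff] at hi
      rw [mem_compl, hB₀mem]
      intro hic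
      have hiA : i ∈ A := (hTmem A hA).1 ((hB₀mem i).2 hic)
      have hiB : i ∈ B := (hTmem B hB.1).1 ((hB₀mem i).2 hic)
      tauto
    calc (T.filter (fun B => (symmDiff A B).card ≤ k)).card ≤ U.card :=
          card_le_card_of_injOn _ hmaps hinj
      _ ≤ ∑ j ∈ Finset.range (k + 1), (Finset.powersetCard j B₀ᶜ).card := card_biUnion_le
      _ = m := by
          rw [hm]; apply Finset.sum_congr rfl; intro j _
          rw [card_powersetCard, hB₀compl]
  have hmle : m ≤ (k + 1) * Nat.choose (3 * c) k := by
    rw [hm]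
    calc ∑ j ∈ Finset.range (k + 1), Nat.choose (3 * c) j
        ≤ ∑ _j ∈ Finset.range (k + 1), Nat.choose (3 * c) k := by
          apply Finset.sum_le_sum
          intro j hj
          have hj' := mem_range.1 hj
          exact gv_choose_mono c j k (by omega) (Nat.div_le_self _ _)
      _ = (k + 1) * Nat.choose (3 * c) k := by rw [Finset.sum_const, card_range, smul_eq_mul]
  have hmpos : 0 < m := by
    rw [hm]
    have h0 : (0 : ℕ) ∈ Finset.range (k + 1) := mem_range.2 (by omega)
    have := Finset.single_le_sum (f := fun j => Nat.choose (3 * c) j)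
      (fun j _ => Nat.zero_le _) h0
    simp at this; omega
  -- greedy
  obtain ⟨F₀, hF₀sub, hF₀card, hF₀pair⟩ := gv_greedy (fun A B => (symmDiff A B).card ≤ k)
    (fun A B h => by show (symmDiff B A).card ≤ k; rw [symmDiff_comm]; exact h) (fun A => by simp) m T.card T le_rfl hball
  -- indicator map
  set χ : Finset (Fin (4 * c)) → (Fin (4 * c) → Fin 2) :=
    fun A i => if i ∈ A then 1 else 0 with hχ
  have hχinj : Function.Injective χ := by
    intro A B hAB
    ext i
    have := congrFun hAB i
    rw [hχ] at this
    by_cases hA : i ∈ A <;> by_cases hB : i ∈ B <;> simp_all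
  have hχdist : ∀ A B, hammingDist (χ A) (χ B) = (symmDiff A B).card := by
    intro A B
    rw [hammingDist]
    congr 1
    ext i
    rw [Finset.mem_filter, Finset.mem_symmDiff, hχ]
    by_cases hA : i ∈ A <;> by_cases hB : i ∈ B <;> simp [hA, hB]
  have hχsum : ∀ A : Finset (Fin (4 * c)), ∑ i, ((χ A i : ℕ)) = A.card := by
    intro A
    rw [hχ]
    have : ∀ i : Fin (4 * c), (((if i ∈ A then (1 : Fin 2) else 0) : Fin 2) : ℕ)
        = if i ∈ A then 1 else 0 := by
      intro i; by_cases h : i ∈ A <;> simp [h]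
    simp only [this]
    rw [Finset.sum_boole]
    simp
  refine ⟨F₀.image χ, ?_, ?_, ?_⟩
  · intro w hw
    rw [mem_image] at hw
    obtain ⟨A, hA, rfl⟩ := hw
    rw [hχsum, (hTmem A (hF₀sub hA)).2.1]
    omega
  · have hFcard : (F₀.image χ).card = F₀.card := card_image_of_injective _ hχinj
    rw [hFcard]
    -- exp(d/32) * m ≤ T.card ≤ F₀.card * m
    have hest := gv_real_est c hc
    have hTle : (Nat.choose (3 * c) c : ℝ) ≤ (F₀.card : ℝ) * m := by
      rw [← hTcard]
      exact_mod_cast hF₀card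
    have hmr : (m : ℝ) ≤ ((k : ℝ) + 1) * (Nat.choose (3 * c) k : ℝ) := by
      exact_mod_cast hmle
    have hmrpos : (0 : ℝ) < m := by exact_mod_cast hmpos
    have hexp : Real.exp ((4 * c : ℝ) / 32) * (m : ℝ) ≤ (F₀.card : ℝ) * m := by
      calc Real.exp ((4 * c : ℝ) / 32) * (m : ℝ)
          ≤ Real.exp ((4 * c : ℝ) / 32) * (((k : ℝ) + 1) * (Nat.choose (3 * c) k : ℝ)) := by
            apply mul_le_mul_of_nonneg_left hmr (le_of_lt (Real.exp_pos _))
        _ ≤ (Nat.choose (3 * c) c : ℝ) := hest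
        _ ≤ (F₀.card : ℝ) * m := hTle
    have := le_of_mul_le_mul_right (by linarith : Real.exp ((4 * c : ℝ) / 32) * (m : ℝ) ≤ (F₀.card : ℝ) * (m : ℝ)) hmrpos
    calc Real.exp (((4 * c : ℕ) : ℝ) / 32) = Real.exp ((4 * c : ℝ) / 32) := by push_cast; ring_nf
      _ ≤ (F₀.card : ℝ) := this
  · intro w hw w' hw' hne
    rw [mem_image] at hw hw'
    obtain ⟨A, hA, rfl⟩ := hw
    obtain ⟨B, hB, rfl⟩ := hw'
    have hABne : A ≠ B := fun h => hne (by rw [h])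
    have hfar : ¬ (symmDiff A B).card ≤ k := hF₀pair A hA B hB hABne
    rw [hχdist]
    constructor
    · -- lower bound
      have h1 : k + 1 ≤ (symmDiff A B).card := by omega
      have h2 : c ≤ 2 * (symmDiff A B).card := by omega
      have := (Nat.cast_le (α := ℝ)).2 h2
      push_cast at this
      push_cast
      linarith
    · -- upper bound: symmDiff A B ⊆ (A \ B₀) ∪ (B \ B₀)
      have hsub : symmDiff A B ⊆ (A \ B₀) ∪ (B \ B₀) := by
        intro i hi
        rw [Finset.mem_symmDiff] at hi
        rw [mem_union, mem_sdiff, mem_sdiff]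
        have hiB₀ : i ∈ B₀ → False := by
          intro hib
          have hiA : i ∈ A := (hTmem A (hF₀sub hA)).1 hib
          have hiB : i ∈ B := (hTmem B (hF₀sub hB)).1 hib
          tauto
        tauto
      have hcard : (symmDiff A B).card ≤ 2 * c := by
        calc (symmDiff A B).card ≤ ((A \ B₀) ∪ (B \ B₀)).card := card_le_card hsub
          _ ≤ (A \ B₀).card + (B \ B₀).card := card_union_le _ _
          _ = 2 * c := by
              rw [(hTmem A (hF₀sub hA)).2.2, (hTmem B (hF₀sub hB)).2.2]; ring
      have := (Nat.cast_le (α := ℝ)).2 hcard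
      push_cast at this ⊢
      linarith
end

section
/- Let θ ∈ [0,1]^{n×n} satisfy the SST tournament constraints (for the identity ordering): θ_{ij} ≤ θ_{ik} whenever i ≠ j, i ≠ k, k < j; θ_{ji} = 1 - θ_{ij} for i ≠ j; θ_{ii} = 0. Let R_i(θ) = Σⱼ θ_{ij}. Then for any indices i, j with |R_i(pθ) - R_j(pθ)| ≤ 4√(np log n), we have Σ_{k=1}^n (pθ_{ik} - pθ_{jk})² ≤ 4p √(np log n), for any p ∈ (0,1]. -/
open Finset

/-- SST tournament constraints (identity ordering) for an `n × n` matrix with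
1-based indices in `[1, n]`. -/
def SSTTournament (n : ℕ) (θ : ℕ → ℕ → ℝ) : Prop :=
  (∀ i ∈ Icc 1 n, ∀ j ∈ Icc 1 n, θ i j ∈ Set.Icc (0 : ℝ) 1) ∧
  (∀ i ∈ Icc 1 n, ∀ j ∈ Icc 1 n, ∀ k ∈ Icc 1 n,
      i ≠ j → i ≠ k → k < j → θ i j ≤ θ i k) ∧
  (∀ i ∈ Icc 1 n, ∀ j ∈ Icc 1 n, i ≠ j → θ j i = 1 - θ i j) ∧
  (∀ i ∈ Icc 1 n, θ i i = 0)

lemma aux_stmt6 (n : ℕ) (hn : 2 ≤ n) (p : ℝ) (hp : 0 < p) (hp1 : p ≤ 1)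
    (θ : ℕ → ℕ → ℝ) (hθ : SSTTournament n θ)
    (i j : ℕ) (hi : i ∈ Icc 1 n) (hj : j ∈ Icc 1 n) (hlt : i < j)
    (hR : |(∑ m ∈ Icc 1 n, p * θ i m) - ∑ m ∈ Icc 1 n, p * θ j m|
      ≤ 4 * Real.sqrt (n * p * Real.log n)) :
    ∑ m ∈ Icc 1 n, (p * θ i m - p * θ j m) ^ 2
      ≤ 4 * p * Real.sqrt (n * p * Real.log n) := by
  obtain ⟨hbd, hmono, hsk, hdiag⟩ := hθ
  have hij : i ≠ j := hlt.ne
  have ht0 : 0 ≤ θ i j := (hbd i hi j hj).1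
  have ht1 : θ i j ≤ 1 := (hbd i hi j hj).2
  have hii : θ i i = 0 := hdiag i hi
  have hjj : θ j j = 0 := hdiag j hj
  have hji : θ j i = 1 - θ i j := hsk i hi j hj hij
  -- B ≥ p
  have h2n : (2:ℝ) ≤ (n:ℝ) := by exact_mod_cast hn
  have hlogn : Real.log 2 ≤ Real.log n := Real.log_le_log (by norm_num) h2n
  have hlog2 : (0.6:ℝ) < Real.log 2 := by
    have := Real.log_two_gt_d9; linarith
  have hlogpos : (0:ℝ) < Real.log n := by linarith
  have hpsq : p^2 ≤ (n:ℝ) * p * Real.log n := by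
    have h1 : 2*p ≤ (n:ℝ)*p := by nlinarith
    have h2 : 2*p*Real.log n ≤ (n:ℝ)*p*Real.log n :=
      mul_le_mul_of_nonneg_right h1 hlogpos.le
    nlinarith
  have hpB : p ≤ 4 * Real.sqrt ((n:ℝ) * p * Real.log n) := by
    have h1 : p = Real.sqrt (p^2) := (Real.sqrt_sq hp.le).symm
    have h2 : Real.sqrt (p^2) ≤ Real.sqrt ((n:ℝ)*p*Real.log n) :=
      Real.sqrt_le_sqrt hpsq
    have h3 : 0 ≤ Real.sqrt ((n:ℝ)*p*Real.log n) := Real.sqrt_nonneg _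
    linarith
  -- hypothesis rewritten
  have hA : p * |(∑ m ∈ Icc 1 n, θ i m) - ∑ m ∈ Icc 1 n, θ j m|
      ≤ 4 * Real.sqrt ((n:ℝ) * p * Real.log n) := by
    rw [← Finset.mul_sum, ← Finset.mul_sum, ← mul_sub, abs_mul, abs_of_pos hp] at hR
    exact hR
  -- set subset
  have hsub : ({i, j} : Finset ℕ) ⊆ Icc 1 n := by
    simp [Finset.insert_subset_iff, hi, hj]
  have hsplit : ∀ F : ℕ → ℝ, ∑ m ∈ Icc 1 n, F m
      = (∑ m ∈ Icc 1 n \ {i, j}, F m) + (F i + F j) := by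
    intro F
    rw [← Finset.sum_sdiff hsub, Finset.sum_pair hij]
  -- per-element bound
  have key : ∀ m ∈ Icc 1 n \ ({i, j} : Finset ℕ),
      (θ i m - θ j m)^2 ≤ (1 - θ i j) * (θ j m - θ i m) := by
    intro m hm
    simp only [Finset.mem_sdiff, Finset.mem_insert, Finset.mem_singleton] at hm
    obtain ⟨hmI, hmij⟩ := hm
    push_neg at hmij
    obtain ⟨hmi, hmj⟩ := hmij
    have h1 : θ i m ≤ θ j m := by
      have e1 : θ i m = 1 - θ m i := hsk m hmI i hi hmi
      have e2 : θ j m = 1 - θ m j := hsk m hmI j hj hmj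
      have := hmono m hmI j hj i hi hmj hmi hlt
      linarith
    have h2 : θ j m - θ i m ≤ 1 - θ i j := by
      rcases lt_or_gt_of_ne hmj with hc | hc
      · have ht := hmono i hi j hj m hmI hij (Ne.symm hmi) hc
        have hb := (hbd j hj m hmI).2
        linarith
      · have ht := hmono j hj m hmI i hi (Ne.symm hmj) (Ne.symm hij) (hlt.trans hc)
        have hb := (hbd i hi m hmI).1
        linarith
    have hx : 0 ≤ θ j m - θ i m := by linarith
    nlinarith [mul_le_mul_of_nonneg_left h2 hx]
  -- goal rewrite
  have egoal : ∑ m ∈ Icc 1 n, (p * θ i m - p * θ j m) ^ 2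
      = p^2 * ((∑ m ∈ Icc 1 n \ {i, j}, (θ i m - θ j m)^2)
          + ((1 - θ i j)^2 + (θ i j)^2)) := by
    have hterm : ∀ m, (p * θ i m - p * θ j m)^2 = p^2 * (θ i m - θ j m)^2 :=
      fun m => by ring
    simp_rw [hterm]
    rw [← Finset.mul_sum, hsplit (fun m => (θ i m - θ j m)^2)]
    rw [hii, hji, hjj]
    ring
  have hS : (∑ m ∈ Icc 1 n \ {i, j}, (θ i m - θ j m)^2)
      ≤ (1 - θ i j) * (∑ m ∈ Icc 1 n \ {i, j}, (θ j m - θ i m)) := by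
    rw [Finset.mul_sum]
    exact Finset.sum_le_sum key
  have hD : (∑ m ∈ Icc 1 n \ {i, j}, (θ j m - θ i m))
      = (∑ m ∈ Icc 1 n, θ j m) - (∑ m ∈ Icc 1 n, θ i m) - (1 - 2 * θ i j) := by
    have h := hsplit (fun m => θ j m - θ i m)
    simp only [Finset.sum_sub_distrib] at h
    rw [hii, hji, hjj] at h
    rw [Finset.sum_sub_distrib]
    linarith
  set A := |(∑ m ∈ Icc 1 n, θ i m) - ∑ m ∈ Icc 1 n, θ j m| with hAdef
  have hA0 : 0 ≤ A := abs_nonneg _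
  have h3 : (∑ m ∈ Icc 1 n, θ j m) - (∑ m ∈ Icc 1 n, θ i m) ≤ A := by
    have := neg_abs_le ((∑ m ∈ Icc 1 n, θ i m) - ∑ m ∈ Icc 1 n, θ j m)
    rw [← hAdef] at *
    linarith
  have h4 : (∑ m ∈ Icc 1 n \ {i, j}, (θ i m - θ j m)^2)
      ≤ (1 - θ i j) * (A - (1 - 2 * θ i j)) := by
    have hstep : (∑ m ∈ Icc 1 n \ {i, j}, (θ j m - θ i m)) ≤ A - (1 - 2 * θ i j) := by
      rw [hD]; linarith
    calc (∑ m ∈ Icc 1 n \ {i, j}, (θ i m - θ j m)^2)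
        ≤ (1 - θ i j) * (∑ m ∈ Icc 1 n \ {i, j}, (θ j m - θ i m)) := hS
      _ ≤ (1 - θ i j) * (A - (1 - 2 * θ i j)) :=
          mul_le_mul_of_nonneg_left hstep (by linarith)
  rw [egoal]
  set B := 4 * Real.sqrt ((n:ℝ) * p * Real.log n) with hBdef
  have h1 : p * (1 - θ i j) * (p * A) ≤ p * (1 - θ i j) * B :=
    mul_le_mul_of_nonneg_left hA (mul_nonneg hp.le (by linarith))
  have h2 : p * θ i j * p ≤ p * θ i j * B :=
    mul_le_mul_of_nonneg_left hpB (mul_nonneg hp.le ht0)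
  have h5 := mul_le_mul_of_nonneg_left h4 (sq_nonneg p)
  nlinarith [h1, h2, h5]

theorem stmt_6 (n : ℕ) (hn : 2 ≤ n) (p : ℝ) (hp : 0 < p) (hp1 : p ≤ 1)
    (θ : ℕ → ℕ → ℝ) (hθ : SSTTournament n θ)
    (i j : ℕ) (hi : i ∈ Icc 1 n) (hj : j ∈ Icc 1 n)
    (hR : |(∑ m ∈ Icc 1 n, p * θ i m) - ∑ m ∈ Icc 1 n, p * θ j m|
      ≤ 4 * Real.sqrt (n * p * Real.log n)) :
    ∑ m ∈ Icc 1 n, (p * θ i m - p * θ j m) ^ 2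
      ≤ 4 * p * Real.sqrt (n * p * Real.log n) := by
  rcases lt_trichotomy i j with h | h | h
  · exact aux_stmt6 n hn p hp hp1 θ hθ i j hi hj h hR
  · subst h
    simp only [sub_self]
    have : (0:ℝ) ≤ 4 * p * Real.sqrt (n * p * Real.log n) := by positivity
    simpa using this
  · have hR' : |(∑ m ∈ Icc 1 n, p * θ j m) - ∑ m ∈ Icc 1 n, p * θ i m|
        ≤ 4 * Real.sqrt (n * p * Real.log n) := by rwa [abs_sub_comm] at hR
    have := aux_stmt6 n hn p hp hp1 θ hθ j i hj hi h hR'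
    have hsq : ∀ m, (p * θ i m - p * θ j m)^2 = (p * θ j m - p * θ i m)^2 :=
      fun m => by ring
    simp_rw [hsq]
    exact this
end

section
/- Let θ ∈ [0,1]^{n×n} satisfy θ_{ij} = F(w_i - w_j) for a distribution function F with continuous strictly positive density f, F(x) + F(-x) = 1, and weights w_i ∈ [-M, M]. Set L = sup_{|x|≤2M} f(x), L' = inf_{|x|≤2M} f(x). If i, j satisfy |R_i(pθ) - R_j(pθ)| ≤ 4√(np log n), then Σₖ (pθ_{ik} - pθ_{jk})² ≤ 16p (L/L')² log n. -/
open Finset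

lemma mvt_bound (F f : ℝ → ℝ)
    (hF_deriv : ∀ x, HasDerivAt F (f x) x)
    (C L L' : ℝ)
    (hub : ∀ x ∈ Set.Icc (-C) C, f x ≤ L)
    (hlb : ∀ x ∈ Set.Icc (-C) C, L' ≤ f x)
    (a b : ℝ) (hb : -C ≤ b) (ha : a ≤ C) (hba : b ≤ a) :
    L' * (a - b) ≤ F a - F b ∧ F a - F b ≤ L * (a - b) := by
  rcases eq_or_lt_of_le hba with h | h
  · subst h; simp
  · have hFc : ContinuousOn F (Set.Icc b a) :=
      fun x _ => (hF_deriv x).continuousAt.continuousWithinAt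
    obtain ⟨c, hc, hceq⟩ := exists_hasDerivAt_eq_slope F f h hFc (fun x _ => hF_deriv x)
    have hcK : c ∈ Set.Icc (-C) C := ⟨hb.trans hc.1.le, hc.2.le.trans ha⟩
    have hab : (0:ℝ) < a - b := sub_pos.mpr h
    have heq : F a - F b = f c * (a - b) := by
      rw [hceq, div_mul_cancel₀ _ (ne_of_gt hab)]
    constructor
    · rw [heq]; exact mul_le_mul_of_nonneg_right (hlb c hcK) hab.le
    · rw [heq]; exact mul_le_mul_of_nonneg_right (hub c hcK) hab.le

set_option maxHeartbeats 1000000 in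
lemma stmt_8_aux (n : ℕ) (hn : 2 ≤ n) (p : ℝ) (hp : 0 < p) (hp1 : p ≤ 1)
    (M : ℝ) (hM : 0 < M) (F f : ℝ → ℝ)
    (hf_cont : Continuous f) (hf_pos : ∀ x, 0 < f x)
    (hF_deriv : ∀ x, HasDerivAt F (f x) x)
    (w : ℕ → ℝ) (hw : ∀ i ∈ Icc 1 n, w i ∈ Set.Icc (-M) M)
    (θ : ℕ → ℕ → ℝ)
    (hθ : ∀ i ∈ Icc 1 n, ∀ j ∈ Icc 1 n, θ i j = F (w i - w j))
    (L L' : ℝ)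
    (hL : L = sSup (f '' Set.Icc (-(2 * M)) (2 * M)))
    (hL' : L' = sInf (f '' Set.Icc (-(2 * M)) (2 * M)))
    (i j : ℕ) (hi : i ∈ Icc 1 n) (hj : j ∈ Icc 1 n)
    (hwij : w j ≤ w i)
    (hR : |(∑ m ∈ Icc 1 n, p * θ i m) - ∑ m ∈ Icc 1 n, p * θ j m|
      ≤ 4 * Real.sqrt (n * p * Real.log n)) :
    ∑ m ∈ Icc 1 n, (p * θ i m - p * θ j m) ^ 2
      ≤ 16 * p * (L / L') ^ 2 * Real.log n := by
  have hKne : (Set.Icc (-(2*M)) (2*M)).Nonempty := ⟨0, by constructor <;> nlinarith⟩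
  have himg : IsCompact (f '' Set.Icc (-(2*M)) (2*M)) :=
    isCompact_Icc.image hf_cont
  have himgne : (f '' Set.Icc (-(2*M)) (2*M)).Nonempty := hKne.image f
  have hub : ∀ x ∈ Set.Icc (-(2*M)) (2*M), f x ≤ L :=
    fun x hx => hL ▸ le_csSup himg.bddAbove ⟨x, hx, rfl⟩
  have hlb : ∀ x ∈ Set.Icc (-(2*M)) (2*M), L' ≤ f x :=
    fun x hx => hL' ▸ csInf_le himg.bddBelow ⟨x, hx, rfl⟩
  obtain ⟨x0, hx0K, hx0⟩ : L' ∈ f '' Set.Icc (-(2*M)) (2*M) := hL' ▸ himg.sInf_mem himgne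
  have hL'pos : 0 < L' := hx0 ▸ hf_pos x0
  have hLL' : L' ≤ L := le_trans (le_of_eq hx0.symm) (hub x0 hx0K)
  have hLpos : 0 < L := lt_of_lt_of_le hL'pos hLL'
  set D := w i - w j with hD
  clear_value D
  have hDnn : 0 ≤ D := hD ▸ sub_nonneg.mpr hwij
  obtain ⟨hwi1, hwi2⟩ := hw i hi
  obtain ⟨hwj1, hwj2⟩ := hw j hj
  -- per-term bounds
  have key : ∀ m ∈ Icc 1 n, L' * D ≤ θ i m - θ j m ∧ θ i m - θ j m ≤ L * D := by
    intro m hm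
    obtain ⟨hwm1, hwm2⟩ := hw m hm
    rw [hθ i hi m hm, hθ j hj m hm]
    have h1 : -(2*M) ≤ w j - w m := by linarith
    have h2 : w i - w m ≤ 2*M := by linarith
    have h3 : w j - w m ≤ w i - w m := by linarith
    have hmv := mvt_bound F f hF_deriv (2*M) L L' hub hlb (w i - w m) (w j - w m) h1 h2 h3
    have hrw : w i - w m - (w j - w m) = w i - w j := by ring
    rw [hrw, ← hD] at hmv
    exact hmv
  have hcard : (Icc 1 n).card = n := by simp
  -- lower bound on row-sum difference
  have hsum : (∑ m ∈ Icc 1 n, p * θ i m) - ∑ m ∈ Icc 1 n, p * θ j m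
      = ∑ m ∈ Icc 1 n, p * (θ i m - θ j m) := by
    rw [← Finset.sum_sub_distrib]
    exact Finset.sum_congr rfl fun m _ => by ring
  have hlow : (n : ℝ) * (p * (L' * D)) ≤ (∑ m ∈ Icc 1 n, p * θ i m) - ∑ m ∈ Icc 1 n, p * θ j m := by
    rw [hsum]
    calc (n : ℝ) * (p * (L' * D)) = ∑ _m ∈ Icc 1 n, p * (L' * D) := by
          rw [Finset.sum_const, hcard, nsmul_eq_mul]
      _ ≤ ∑ m ∈ Icc 1 n, p * (θ i m - θ j m) :=
          Finset.sum_le_sum fun m hm => mul_le_mul_of_nonneg_left (key m hm).1 hp.le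
  have hsumnn : 0 ≤ (∑ m ∈ Icc 1 n, p * θ i m) - ∑ m ∈ Icc 1 n, p * θ j m := by
    have : (0:ℝ) ≤ (n : ℝ) * (p * (L' * D)) := by positivity
    linarith
  have hRle : (n : ℝ) * (p * (L' * D)) ≤ 4 * Real.sqrt (n * p * Real.log n) := by
    rw [abs_of_nonneg hsumnn] at hR
    linarith
  have hlogpos : 0 < Real.log n := by
    apply Real.log_pos
    exact_mod_cast lt_of_lt_of_le one_lt_two hn
  have hargnn : (0:ℝ) ≤ n * p * Real.log n := by positivity
  have hsq : Real.sqrt (n * p * Real.log n) ^ 2 = n * p * Real.log n :=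
    Real.sq_sqrt hargnn
  have hnpos : (0:ℝ) < n := by positivity
  -- squared inequality
  have hsq2 : ((n : ℝ) * (p * (L' * D))) ^ 2 ≤ 16 * (n * p * Real.log n) := by
    have h0 : (0:ℝ) ≤ 4 * Real.sqrt (n * p * Real.log n) := by positivity
    have hAnn : (0:ℝ) ≤ (n : ℝ) * (p * (L' * D)) := by positivity
    nlinarith [mul_le_mul hRle hRle hAnn h0, hsq]
  have hD2 : p * (n : ℝ) * L' ^ 2 * D ^ 2 ≤ 16 * Real.log n := by
    have h2 : (n:ℝ) ^ 2 * p ^ 2 * L' ^ 2 * D ^ 2 ≤ 16 * n * p * Real.log n := by nlinarith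
    have hnp : (0:ℝ) < (n:ℝ) * p := mul_pos hnpos hp
    rw [← mul_le_mul_iff_right₀ hnp]
    have e1 : (n:ℝ) * p * (p * n * L' ^ 2 * D ^ 2) = (n:ℝ) ^ 2 * p ^ 2 * L' ^ 2 * D ^ 2 := by ring
    have e2 : (n:ℝ) * p * (16 * Real.log n) = 16 * n * p * Real.log n := by ring
    rw [e1, e2]
    exact h2
  -- upper bound on sum of squares
  have hupp : ∑ m ∈ Icc 1 n, (p * θ i m - p * θ j m) ^ 2 ≤ (n : ℝ) * (p * (L * D)) ^ 2 := by
    calc ∑ m ∈ Icc 1 n, (p * θ i m - p * θ j m) ^ 2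
        ≤ ∑ _m ∈ Icc 1 n, (p * (L * D)) ^ 2 := by
          apply Finset.sum_le_sum
          intro m hm
          have h1 := (key m hm).1
          have h2 := (key m hm).2
          have hnn : 0 ≤ θ i m - θ j m := le_trans (by positivity) h1
          have : p * θ i m - p * θ j m = p * (θ i m - θ j m) := by ring
          rw [this]
          apply sq_le_sq'
          · have hle : p * (θ i m - θ j m) ≤ p * (L * D) :=
              mul_le_mul_of_nonneg_left h2 hp.le
            have h0 : (0:ℝ) ≤ p * (θ i m - θ j m) := mul_nonneg hp.le hnn
            nlinarith [mul_nonneg hp.le (mul_nonneg hLpos.le hDnn)]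
          · exact mul_le_mul_of_nonneg_left h2 hp.le
      _ = (n : ℝ) * (p * (L * D)) ^ 2 := by rw [Finset.sum_const, hcard, nsmul_eq_mul]
  have hfin : (n : ℝ) * (p * (L * D)) ^ 2 ≤ 16 * p * (L / L') ^ 2 * Real.log n := by
    rw [div_pow]
    rw [← sub_nonneg] at hD2 ⊢
    have key2 : 16 * p * (L ^ 2 / L' ^ 2) * Real.log n - (n : ℝ) * (p * (L * D)) ^ 2
        = (p * L ^ 2 / L' ^ 2) * (16 * Real.log n - p * (n : ℝ) * L' ^ 2 * D ^ 2) := by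
      field_simp
    rw [key2]
    positivity
  linarith

/-- Generalized Bradley–Terry matrices: fast adaptation of close rows. -/
theorem stmt_8 (n : ℕ) (hn : 2 ≤ n) (p : ℝ) (hp : 0 < p) (hp1 : p ≤ 1)
    (M : ℝ) (hM : 0 < M) (F f : ℝ → ℝ)
    (hf_cont : Continuous f) (hf_pos : ∀ x, 0 < f x)
    (hF_mono : Monotone F) (hF_deriv : ∀ x, HasDerivAt F (f x) x)
    (hF_sym : ∀ x, F x + F (-x) = 1)
    (w : ℕ → ℝ) (hw : ∀ i ∈ Icc 1 n, w i ∈ Set.Icc (-M) M)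
    (θ : ℕ → ℕ → ℝ)
    (hθ : ∀ i ∈ Icc 1 n, ∀ j ∈ Icc 1 n, θ i j = F (w i - w j))
    (L L' : ℝ)
    (hL : L = sSup (f '' Set.Icc (-(2 * M)) (2 * M)))
    (hL' : L' = sInf (f '' Set.Icc (-(2 * M)) (2 * M)))
    (i j : ℕ) (hi : i ∈ Icc 1 n) (hj : j ∈ Icc 1 n)
    (hR : |(∑ m ∈ Icc 1 n, p * θ i m) - ∑ m ∈ Icc 1 n, p * θ j m|
      ≤ 4 * Real.sqrt (n * p * Real.log n)) :
    ∑ m ∈ Icc 1 n, (p * θ i m - p * θ j m) ^ 2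
      ≤ 16 * p * (L / L') ^ 2 * Real.log n := by
  rcases le_total (w j) (w i) with h | h
  · exact stmt_8_aux n hn p hp hp1 M hM F f hf_cont hf_pos hF_deriv w hw θ hθ L L' hL hL'
      i j hi hj h hR
  · have hR' : |(∑ m ∈ Icc 1 n, p * θ j m) - ∑ m ∈ Icc 1 n, p * θ i m|
        ≤ 4 * Real.sqrt (n * p * Real.log n) := by rwa [abs_sub_comm]
    have := stmt_8_aux n hn p hp hp1 M hM F f hf_cont hf_pos hF_deriv w hw θ hθ L L' hL hL'
      j i hj hi h hR'
    calc ∑ m ∈ Icc 1 n, (p * θ i m - p * θ j m) ^ 2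
        = ∑ m ∈ Icc 1 n, (p * θ j m - p * θ i m) ^ 2 :=
          Finset.sum_congr rfl fun m _ => by ring
      _ ≤ _ := this
end

section
/- (Deterministic sorting lemma, skew-symmetric case) Let θ be an n×n matrix whose row sums R_i := Σⱼ θ_{ij} are nondecreasing in i. Let r ∈ ℝⁿ be any vector satisfying max over i of |r_i - R_i - c| ≤ t for some constant c and t > 0, and let σ̂ be a permutation sorting r, i.e. r_{σ̂(1)} ≤ r_{σ̂(2)} ≤ ... ≤ r_{σ̂(n)}. Then max over i ∈ [n] of |R_i - R_{σ̂(i)}| ≤ 2t. -/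
lemma perm_pigeon_lower {n : ℕ} (σ : Equiv.Perm (Fin n)) (i : Fin n) :
    ∃ j, j ≤ i ∧ i ≤ σ j := by
  by_contra h
  push_neg at h
  have hmap : ∀ j ∈ Finset.Iic i, σ j ∈ Finset.Iio i := by
    intro j hj
    simpa using h j (Finset.mem_Iic.mp hj)
  have hcard := Finset.card_le_card_of_injOn σ hmap
    (Set.injOn_of_injective σ.injective)
  simp [Nat.lt_irrefl] at hcard

lemma perm_pigeon_upper {n : ℕ} (σ : Equiv.Perm (Fin n)) (i : Fin n) :
    ∃ j, i ≤ j ∧ σ j ≤ i := by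
  by_contra h
  push_neg at h
  have hmap : ∀ j ∈ Finset.Ici i, σ j ∈ Finset.Ioi i := by
    intro j hj
    simpa using h j (Finset.mem_Ici.mp hj)
  have hcard := Finset.card_le_card_of_injOn σ hmap
    (Set.injOn_of_injective σ.injective)
  rw [Fin.card_Ici, Fin.card_Ioi] at hcard
  omega

/-- Deterministic sorting lemma: sorting noisy row sums does not move
the true row sums by more than `2t`. -/
theorem stmt_11 (n : ℕ) (θ : Fin n → Fin n → ℝ) (R : Fin n → ℝ)
    (hR : ∀ i, R i = ∑ j, θ i j) (hmono : Monotone R)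
    (r : Fin n → ℝ) (c t : ℝ) (ht : 0 < t)
    (hconc : ∀ i, |r i - R i - c| ≤ t)
    (σ : Equiv.Perm (Fin n)) (hσ : Monotone fun i => r (σ i)) :
    ∀ i, |R i - R (σ i)| ≤ 2 * t := by
  intro i
  rw [abs_le]
  have hc : ∀ k, R k + c - t ≤ r k ∧ r k ≤ R k + c + t := by
    intro k
    have := abs_le.mp (hconc k)
    constructor <;> linarith [this.1, this.2]
  constructor
  · obtain ⟨j, hij, hji⟩ := perm_pigeon_upper σ i
    have h1 : r (σ i) ≤ r (σ j) := hσ hij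
    have h2 : R (σ j) ≤ R i := hmono hji
    linarith [(hc (σ i)).1, (hc (σ j)).2]
  · obtain ⟨j, hji, hij⟩ := perm_pigeon_lower σ i
    have h1 : r (σ j) ≤ r (σ i) := hσ hji
    have h2 : R i ≤ R (σ j) := hmono hij
    linarith [(hc (σ j)).1, (hc (σ i)).2]
end
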